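/- Suppose S=(s_i) is a de Bruijn sequence of order n > 1, and let D^{-1}(S) = {T, T'}, the disjoint pair of complementary (n+1)-window sequences of period 2^n. Then T and T' contain conjugate (n+1)-tuples, i.e., there exist positions i and j such that the (n+1)-tuple of T at position i is the conjugate of the (n+1)-tuple of T' at position j. -/

import Mathlib

/-- A sequence has `m` as a (not necessarily least) period. -/
def hasPer (s : ℕ → Bool) (m : ℕ) : Prop := ∀ i, s (i + m) = s i

/-- `m` is the (least positive) period of `s`. -/
def isPeriod (s : ℕ → Bool) (m : ℕ) : Prop :=
  0 < m ∧ hasPer s m ∧ ∀ k, 0 < k → hasPer s k → m ≤ k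

/-- The `n`-tuple appearing at position `i` of `s`. -/
def tup (s : ℕ → Bool) (n i : ℕ) : Fin n → Bool := fun k => s (i + (k : ℕ))

/-- The reverse of an `n`-tuple. -/
def tupRev {n : ℕ} (u : Fin n → Bool) : Fin n → Bool := fun k => u k.rev

/-- An `n`-window sequence of period `m`. -/
def isNWindow (s : ℕ → Bool) (n m : ℕ) : Prop :=
  isPeriod s m ∧ ∀ i j, tup s n i = tup s n j → i ≡ j [MOD m]

/-- The weight of (one period of) `s`. -/
def wt (s : ℕ → Bool) (m : ℕ) : ℕ := ∑ i ∈ Finset.range m, (if s i then 1 else 0)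

/-- The complement of a sequence. -/
def seqCompl (s : ℕ → Bool) : ℕ → Bool := fun i => !(s i)

/-- Two sequences are disjoint if they share no `n`-tuple. -/
def disjointSeq (s t : ℕ → Bool) (n : ℕ) : Prop := ∀ i j, tup s n i ≠ tup t n j

/-- A sequence is primitive if it is disjoint from its complement. -/
def primitiveSeq (s : ℕ → Bool) (n : ℕ) : Prop := disjointSeq s (seqCompl s) n

/-- An orientable sequence of order `n` and period `m`. -/
def isOrientable (s : ℕ → Bool) (n m : ℕ) : Prop :=
  isNWindow s n m ∧ ∀ i j, tup s n i ≠ tupRev (tup s n j)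

/-- Two sequences are o-disjoint: disjoint, and no `n`-tuple of one is the
reverse of an `n`-tuple of the other. -/
def oDisjoint (s t : ℕ → Bool) (n : ℕ) : Prop :=
  disjointSeq s t n ∧ ∀ i j, tup s n i ≠ tupRev (tup t n j)

/-- The Lempel homomorphism `D` on periodic sequences. -/
def Dmap (t : ℕ → Bool) : ℕ → Bool := fun i => xor (t i) (t (i + 1))

/-- The set `D⁻¹(s)` of sequences mapping to `s` under `D`. -/
def Dinv (s : ℕ → Bool) : Set (ℕ → Bool) := { t | Dmap t = s }

/-- The conjugate of an `n`-tuple: flip its first bit. -/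
def conjT {n : ℕ} (u : Fin n → Bool) : Fin n → Bool :=
  fun k => if (k : ℕ) = 0 then !(u k) else u k


lemma hasPer_add_mul {f : ℕ → Bool} {m : ℕ} (hf : hasPer f m) :
    ∀ k a, f (a + k * m) = f a := by
  intro k
  induction k with
  | zero => simp
  | succ k ih =>
    intro a
    have e : a + (k + 1) * m = (a + m) + k * m := by ring
    rw [e, ih, hf]

lemma hasPer_modEq {f : ℕ → Bool} {m : ℕ} (hm : 0 < m) (hf : hasPer f m)
    {a b : ℕ} (hab : a ≡ b [MOD m]) : f a = f b := by
  have h1 : ∀ a, f a = f (a % m) := by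
    intro a
    conv_lhs => rw [← Nat.mod_add_div a m]
    rw [mul_comm]
    exact (hasPer_add_mul hf _ _)
  rw [h1 a, h1 b]
  exact congrArg f hab

lemma xor_solve {a b c : Bool} (h : xor a b = c) : b = xor a c := by
  cases a <;> cases b <;> simp_all

/-- Lemma 1: if `S` is a de Bruijn sequence of order `n > 1` and
`D⁻¹(S) = {T, T'}` is the disjoint pair of complementary `(n+1)`-window
sequences of period `2^n`, then `T` and `T'` contain conjugate `(n+1)`-tuples. -/
theorem conjugate_pair (n : ℕ) (s t t' : ℕ → Bool) (hn : 1 < n)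
    (h : isNWindow s n (2 ^ n))
    (hD : Dinv s = {t, t'}) (hne : t ≠ t') (hc : t' = seqCompl t)
    (hdisj : disjointSeq t t' (n + 1))
    (hT : isNWindow t (n + 1) (2 ^ n)) (hT' : isNWindow t' (n + 1) (2 ^ n)) :
    ∃ i j, tup t (n + 1) i = conjT (tup t' (n + 1) j) := by
  by_contra hno
  push_neg at hno
  have hm0 : 0 < 2 ^ n := Nat.pow_pos (by norm_num)
  have hDt : Dmap t = s := by
    have ht : t ∈ Dinv s := by rw [hD]; exact Set.mem_insert t {t'}
    exact ht
  have hst : ∀ i, t (i + 1) = xor (t i) (s i) := fun i => xor_solve (congrFun hDt i)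
  have hps : hasPer s (2 ^ n) := h.1.2.1
  have hpt : hasPer t (2 ^ n) := hT.1.2.1
  -- window map is surjective
  have hsurj : ∀ v : Fin n → Bool, ∃ p : ℕ, tup s n p = v := by
    have hinj : Function.Injective (fun p : Fin (2 ^ n) => tup s n p) := by
      intro p q hpq
      have hmod := h.2 p q hpq
      have : (p : ℕ) % 2 ^ n = (q : ℕ) % 2 ^ n := hmod
      exact Fin.ext (by rwa [Nat.mod_eq_of_lt p.isLt, Nat.mod_eq_of_lt q.isLt] at this)
    have hcard : Fintype.card (Fin (2 ^ n)) = Fintype.card (Fin n → Bool) := by simp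
    have hbij := (Fintype.bijective_iff_injective_and_card
      (fun p : Fin (2 ^ n) => tup s n p)).mpr ⟨hinj, hcard⟩
    intro v
    obtain ⟨p, hp⟩ := hbij.2 v
    exact ⟨(p : ℕ), hp⟩
  -- translate the negated goal to a statement about s-windows
  have Hc : ∀ i j, tup s n j = conjT (tup s n i) → t i ≠ t j := by
    intro i j hij htij
    apply hno i j
    have hs0 : s j = !(s i) := by
      have := congrFun hij ⟨0, by omega⟩
      simpa [tup, conjT] using this
    have hsk : ∀ k, 1 ≤ k → k < n → s (j + k) = s (i + k) := by
      intro k h1 h2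
      have := congrFun hij ⟨k, h2⟩
      simpa [tup, conjT, show k ≠ 0 by omega] using this
    have aux : ∀ k, k ≤ n → 1 ≤ k → t (j + k) = !(t (i + k)) := by
      intro k
      induction k with
      | zero => intro _ hk; omega
      | succ k ih =>
        intro hkn _
        rcases Nat.eq_zero_or_pos k with hk0 | hk1
        · subst hk0
          have h1 : t (j + 1) = xor (t j) (s j) := hst j
          have h2 : t (i + 1) = xor (t i) (s i) := hst i
          rw [h1, h2, hs0, ← htij]
          cases t i <;> cases s i <;> rfl
        · have e1 : t (j + (k + 1)) = xor (t (j + k)) (s (j + k)) := hst (j + k)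
          have e2 : t (i + (k + 1)) = xor (t (i + k)) (s (i + k)) := hst (i + k)
          rw [e1, e2, ih (by omega) hk1, hsk k hk1 (by omega)]
          cases t (i + k) <;> cases s (i + k) <;> rfl
    funext k
    rcases k with ⟨k, hk⟩
    simp only [tup, conjT, hc, seqCompl]
    rcases Nat.eq_zero_or_pos k with h0 | h1
    · subst h0; simpa using htij
    · rw [if_neg (by simpa using (show k ≠ 0 by omega))]
      rw [aux k (by omega) h1]
      simp
  -- the key step lemma
  have STEP : ∀ i q, (∀ k, k < n - 1 → s (q + k) = s (i + 1 + k)) →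
      t q = xor (t i) (s i) := by
    intro i q hq
    obtain ⟨j, hj⟩ := hsurj (conjT (tup s n i))
    have hs0 : s j = !(s i) := by
      have := congrFun hj ⟨0, by omega⟩
      simpa [tup, conjT] using this
    have hsk : ∀ k, 1 ≤ k → k < n → s (j + k) = s (i + k) := by
      intro k h1 h2
      have := congrFun hj ⟨k, h2⟩
      simpa [tup, conjT, show k ≠ 0 by omega] using this
    have htj : t i ≠ t j := Hc i j hj
    have hlast : s (j + n) = !(s (i + n)) := by
      by_contra hne2
      have heq : s (j + n) = s (i + n) := by
        cases h1 : s (j + n) <;> cases h2 : s (i + n) <;> simp_all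
      have hw : tup s n (i + 1) = tup s n (j + 1) := by
        funext k
        rcases k with ⟨k, hk⟩
        simp only [tup]
        rcases Nat.lt_or_ge k (n - 1) with hlt | hge
        · have e := hsk (k + 1) (by omega) (by omega)
          have e1 : i + 1 + k = i + (k + 1) := by ring
          have e2 : j + 1 + k = j + (k + 1) := by ring
          rw [e1, e2, e]
        · have hk1 : k = n - 1 := by omega
          subst hk1
          have e1 : i + 1 + (n - 1) = i + n := by omega
          have e2 : j + 1 + (n - 1) = j + n := by omega
          rw [e1, e2, heq]
      have hcong := h.2 (i + 1) (j + 1) hw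
      have hij : i ≡ j [MOD 2 ^ n] := Nat.ModEq.add_right_cancel' 1 hcong
      have hss : s i = s j := hasPer_modEq hm0 hps hij
      rw [hs0] at hss
      exact absurd hss (by cases s i <;> simp)
    by_cases hb : s (q + (n - 1)) = s (i + n)
    · have hw : tup s n q = tup s n (i + 1) := by
        funext k
        rcases k with ⟨k, hk⟩
        simp only [tup]
        rcases Nat.lt_or_ge k (n - 1) with hlt | hge
        · exact hq k hlt
        · have hk1 : k = n - 1 := by omega
          subst hk1
          rw [hb]
          congr 1
          omega
      have hcong := h.2 q (i + 1) hw
      have htq : t q = t (i + 1) := hasPer_modEq hm0 hpt hcong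
      rw [htq]
      exact hst i
    · have hb' : s (q + (n - 1)) = s (j + n) := by
        rw [hlast]
        cases h1 : s (q + (n - 1)) <;> cases h2 : s (i + n) <;> simp_all
      have hw : tup s n q = tup s n (j + 1) := by
        funext k
        rcases k with ⟨k, hk⟩
        simp only [tup]
        rcases Nat.lt_or_ge k (n - 1) with hlt | hge
        · rw [hq k hlt]
          have e1 : i + 1 + k = i + (k + 1) := by ring
          have e2 : j + 1 + k = j + (k + 1) := by ring
          rw [e1, e2, hsk (k + 1) (by omega) (by omega)]
        · have hk1 : k = n - 1 := by omega
          subst hk1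
          rw [hb']
          congr 1
          omega
      have hcong := h.2 q (j + 1) hw
      have h3 : t q = t (j + 1) := hasPer_modEq hm0 hpt hcong
      have h4 : t j = !(t i) := by
        cases h1 : t i <;> cases h2 : t j <;> simp_all
      rw [h3, hst j, h4, hs0]
      cases t i <;> cases s i <;> rfl
  -- backwards step with a zero bit
  have BACK : ∀ q, ∃ p, t p = t q ∧ s p = false ∧
      ∀ k, 1 ≤ k → k < n → s (p + k) = s (q + (k - 1)) := by
    intro q
    obtain ⟨p, hp⟩ := hsurj
      (fun k : Fin n => if (k : ℕ) = 0 then false else s (q + ((k : ℕ) - 1)))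
    have hp0 : s p = false := by
      have := congrFun hp ⟨0, by omega⟩
      simpa [tup] using this
    have hpk : ∀ k, 1 ≤ k → k < n → s (p + k) = s (q + (k - 1)) := by
      intro k h1 h2
      have := congrFun hp ⟨k, h2⟩
      simpa [tup, show k ≠ 0 by omega] using this
    have hstep : t q = xor (t p) (s p) := by
      apply STEP p q
      intro k hk
      have e : p + 1 + k = p + (k + 1) := by ring
      rw [e, hpk (k + 1) (by omega) (by omega)]
      simp
    refine ⟨p, ?_, hp0, hpk⟩
    rw [hstep, hp0]
    simp
  -- iterate: reach a position with an all-zero window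
  have ZERO : ∀ r q, ∃ p, t p = t q ∧ ∀ k, k < min r n → s (p + k) = false := by
    intro r
    induction r with
    | zero => intro q; exact ⟨q, rfl, by omega⟩
    | succ r ih =>
      intro q
      obtain ⟨p1, hp1t, hp1z⟩ := ih q
      obtain ⟨p, hpt, hp0, hpk⟩ := BACK p1
      refine ⟨p, by rw [hpt, hp1t], ?_⟩
      intro k hk
      rcases Nat.eq_zero_or_pos k with h0 | h1
      · subst h0; simpa using hp0
      · rw [hpk k h1 (by omega)]
        exact hp1z (k - 1) (by omega)
  -- finish
  obtain ⟨z, hz⟩ := hsurj (fun _ => false)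
  obtain ⟨j0, hj0⟩ := hsurj (fun k : Fin n => if (k : ℕ) = 0 then true else false)
  have hzk : ∀ k, k < n → s (z + k) = false := by
    intro k hk
    have := congrFun hz ⟨k, hk⟩
    simpa [tup] using this
  have hHc : t z ≠ t j0 := by
    apply Hc z j0
    funext k
    rcases k with ⟨k, hk⟩
    have h1 := congrFun hj0 ⟨k, hk⟩
    simp only [tup] at h1 ⊢
    simp only [conjT, tup]
    rw [h1, hzk k hk]
    by_cases h0 : k = 0 <;> simp [h0]
  obtain ⟨p1, hp1t, hp1z⟩ := ZERO n z
  obtain ⟨p2, hp2t, hp2z⟩ := ZERO n j0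
  have hw : tup s n p1 = tup s n p2 := by
    funext k
    rcases k with ⟨k, hk⟩
    simp only [tup]
    rw [hp1z k (by omega), hp2z k (by omega)]
  have hcong := h.2 p1 p2 hw
  have hfin : t p1 = t p2 := hasPer_modEq hm0 hpt hcong
  rw [hp1t, hp2t] at hfin
  exact hHc hfin
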